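/- Let m and N be positive integers and let σ ∈ S_m be the standard long cycle. For every permutation α ∈ S_m one has w_{gl(N)}(σ⁻¹ · α · σ) = w_{gl(N)}(α), i.e., the element w_{gl(N)}(α) of U(gl(N)) is invariant under conjugation of α by the standard cyclic permutation. -/

import Mathlib

open scoped BigOperators

attribute [local instance 100] LieRing.ofAssociativeRing

/-- The matrix unit `E i j` in `gl(N)`. -/
noncomputable def glE (N : ℕ) (i j : Fin N) : Matrix (Fin N) (Fin N) ℂ :=
  Matrix.single i j 1

/-- The universal `gl(N)`-weight system on a permutation `α` of `m` elements. -/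
noncomputable def wgl (m N : ℕ) (α : Equiv.Perm (Fin m)) :
    UniversalEnvelopingAlgebra ℂ (Matrix (Fin N) (Fin N) ℂ) :=
  ∑ i : Fin m → Fin N,
    ((List.finRange m).map fun k =>
      UniversalEnvelopingAlgebra.ι ℂ (glE N (i k) (i (α k)))).prod

theorem Equiv.Perm.apply_inv_self {γ : Type*} (f : Equiv.Perm γ) (x : γ) : f (f⁻¹ x) = x :=
  f.apply_symm_apply x

theorem Equiv.Perm.inv_apply_self {γ : Type*} (f : Equiv.Perm γ) (x : γ) : f⁻¹ (f x) = x :=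
  f.symm_apply_apply x

namespace WGLaux

section prodUpd
variable {R : Type*} [Ring R] {β : Type*} [DecidableEq β]

/-- product of `l.map g` with the entry at `k` replaced by `X` -/
def prodUpd (l : List β) (g : β → R) (k : β) (X : R) : R :=
  (l.map fun r => if r = k then X else g r).prod

lemma prodUpd_congr {l : List β} {g g' : β → R} {k k' : β} {X X' : R}
    (h : ∀ r ∈ l, (if r = k then X else g r) = (if r = k' then X' else g' r)) :
    prodUpd l g k X = prodUpd l g' k' X' := by
  unfold prodUpd
  rw [List.map_congr_left h]

lemma prodUpd_factor (g : β → R) :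
    ∀ (l : List β) (k : β), k ∈ l → l.Nodup →
      ∃ u v : R, ∀ X, prodUpd l g k X = u * X * v := by
  intro l
  induction l with
  | nil => intro k hk; simp at hk
  | cons x s ih =>
    intro k hk hnd
    rcases List.mem_cons.mp hk with h | h
    · refine ⟨1, (s.map g).prod, fun X => ?_⟩
      subst h
      simp only [prodUpd, List.map_cons, List.prod_cons, if_pos rfl, one_mul, mul_assoc]
      congr 2
      apply List.map_congr_left
      intro r hr
      have : r ≠ k := fun hrk => (List.nodup_cons.mp hnd).1 (hrk ▸ hr)
      simp [this]
    · obtain ⟨u, v, huv⟩ := ih k h (List.nodup_cons.mp hnd).2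
      refine ⟨g x * u, v, fun X => ?_⟩
      have hxk : x ≠ k := fun hxk => (List.nodup_cons.mp hnd).1 (hxk ▸ h)
      simp only [prodUpd, List.map_cons, List.prod_cons, if_neg hxk] at *
      rw [huv X, mul_assoc, mul_assoc, mul_assoc]

lemma comm_expand (a : R) (g : β → R) :
    ∀ (l : List β), l.Nodup →
      a * (l.map g).prod - (l.map g).prod * a
        = (l.map fun k => prodUpd l g k (a * g k - g k * a)).sum := by
  intro l
  induction l with
  | nil => simp
  | cons x s ih =>
    intro hnd
    obtain ⟨hx, hs⟩ := List.nodup_cons.mp hnd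
    have e1 : prodUpd (x :: s) g x (a * g x - g x * a)
        = (a * g x - g x * a) * (s.map g).prod := by
      simp only [prodUpd, List.map_cons, List.prod_cons, if_pos rfl]
      congr 1
      apply congrArg
      apply List.map_congr_left
      intro r hr
      have : r ≠ x := fun h => hx (h ▸ hr)
      simp [this]
    have e2 : ∀ k ∈ s, prodUpd (x :: s) g k (a * g k - g k * a)
        = g x * prodUpd s g k (a * g k - g k * a) := by
      intro k hk
      have : x ≠ k := fun h => hx (h ▸ hk)
      simp [prodUpd, this]
    calc a * ((x :: s).map g).prod - ((x :: s).map g).prod * a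
        = (a * g x - g x * a) * (s.map g).prod
          + g x * (a * (s.map g).prod - (s.map g).prod * a) := by
          simp only [List.map_cons, List.prod_cons]
          noncomm_ring
      _ = (a * g x - g x * a) * (s.map g).prod
          + g x * (s.map fun k => prodUpd s g k (a * g k - g k * a)).sum := by rw [ih hs]
      _ = ((x :: s).map fun k => prodUpd (x :: s) g k (a * g k - g k * a)).sum := by
          rw [List.map_cons, List.sum_cons, e1]
          congr 1
          rw [← List.sum_map_mul_left]
          congr 1
          apply List.map_congr_left
          intro k hk
          exact (e2 k hk).symm

end prodUpd

local notation "ι'" => UniversalEnvelopingAlgebra.ι ℂ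

/-- the elementary factor of `wgl` -/
noncomputable def fent (N : ℕ) {m : ℕ} (α : Equiv.Perm (Fin m)) (i : Fin m → Fin N)
    (k : Fin m) : UniversalEnvelopingAlgebra ℂ (Matrix (Fin N) (Fin N) ℂ) :=
  ι' (glE N (i k) (i (α k)))

lemma glE_mul {N : ℕ} (a b c d : Fin N) :
    glE N a b * glE N c d = if b = c then glE N a d else 0 := by
  unfold glE
  by_cases h : b = c
  · subst h
    rw [if_pos rfl, Matrix.single_mul_single_same, one_mul]
  · rw [if_neg h]
    exact Matrix.single_mul_single_of_ne (h := h) ..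

lemma fent_comm {N m' : ℕ} (α : Equiv.Perm (Fin (m' + 1))) (i : Fin (m' + 1) → Fin N)
    (k : Fin (m' + 1)) :
    fent N α i 0 * fent N α i k - fent N α i k * fent N α i 0
      = (if i (α 0) = i k then ι' (glE N (i 0) (i (α k))) else 0)
        - (if i (α k) = i 0 then ι' (glE N (i k) (i (α 0))) else 0) := by
  have h : fent N α i 0 * fent N α i k - fent N α i k * fent N α i 0
      = ι' ⁅glE N (i 0) (i (α 0)), glE N (i k) (i (α k))⁆ := by
    rw [LieHom.map_lie]
    rw [Ring.lie_def]
    rfl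
  rw [h, Ring.lie_def, glE_mul, glE_mul]
  rw [map_sub]
  congr 1
  · split <;> simp
  · split <;> simp

/-- the list of nonzero positions -/
def tl (m' : ℕ) : List (Fin (m' + 1)) := (List.finRange m').map Fin.succ

lemma tl_nodup (m' : ℕ) : (tl m').Nodup :=
  (List.nodup_finRange m').map (Fin.succ_injective m')

lemma mem_tl {m' : ℕ} {k : Fin (m' + 1)} : k ∈ tl m' ↔ k ≠ 0 := by
  constructor
  · rintro hk rfl
    obtain ⟨p, -, hp⟩ := List.mem_map.mp hk
    exact Fin.succ_ne_zero p hp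
  · intro hk
    exact List.mem_map.mpr ⟨k.pred hk, List.mem_finRange _, Fin.succ_pred k hk⟩

lemma map_finRotate_finRange (m' : ℕ) :
    (List.finRange (m' + 1)).map (finRotate (m' + 1)) = tl m' ++ [0] := by
  apply List.ext_getElem
  · simp [tl]
  intro n h1 h2
  simp only [List.length_map, List.length_finRange] at h1
  rw [List.getElem_map, List.getElem_finRange, finRotate_succ_apply]
  rcases lt_or_ge n m' with h | h
  · have hlen : n < (tl m').length := by simpa [tl] using h
    rw [List.getElem_append_left hlen]
    simp only [tl, List.getElem_map, List.getElem_finRange]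
    ext
    rw [Fin.val_add_one_of_lt (by simp [Fin.lt_iff_val_lt_val, Fin.last]; omega)]
    simp [Fin.succ]
  · have hn : n = m' := by omega
    subst hn
    rw [List.getElem_append_right (by simp [tl])]
    ext
    simp [tl, Fin.val_add]

lemma prodUpd_split {N m' : ℕ} (α : Equiv.Perm (Fin (m' + 1))) (i : Fin (m' + 1) → Fin N)
    {k : Fin (m' + 1)} (hk : k ∈ tl m') :
    prodUpd (tl m') (fent N α i) k
        (fent N α i 0 * fent N α i k - fent N α i k * fent N α i 0)
      = (if i (α 0) = i k then
            prodUpd (tl m') (fent N α i) k (ι' (glE N (i 0) (i (α k)))) else 0)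
        - (if i (α k) = i 0 then
            prodUpd (tl m') (fent N α i) k (ι' (glE N (i k) (i (α 0)))) else 0) := by
  obtain ⟨u, v, huv⟩ := prodUpd_factor (fent N α i) (tl m') k hk (tl_nodup m')
  rw [huv, fent_comm, mul_sub, sub_mul]
  congr 1
  · split
    · rw [huv]
    · rw [mul_zero, zero_mul]
  · split
    · rw [huv]
    · rw [mul_zero, zero_mul]

lemma wgl_head (N m' : ℕ) (α : Equiv.Perm (Fin (m' + 1))) :
    wgl (m' + 1) N α = ∑ i : Fin (m' + 1) → Fin N,
      fent N α i 0 * ((tl m').map (fent N α i)).prod := by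
  unfold wgl
  refine Finset.sum_congr rfl fun i _ => ?_
  have hl : List.finRange (m' + 1) = 0 :: (List.finRange m').map Fin.succ :=
    List.finRange_succ
  rw [hl, List.map_cons, List.prod_cons]
  rfl

lemma wgl_tail (N m' : ℕ) (α : Equiv.Perm (Fin (m' + 1))) :
    wgl (m' + 1) N ((finRotate (m' + 1))⁻¹ * α * finRotate (m' + 1))
      = ∑ i : Fin (m' + 1) → Fin N,
        ((tl m').map (fent N α i)).prod * fent N α i 0 := by
  unfold wgl
  set σ := finRotate (m' + 1) with hσ
  set β := σ⁻¹ * α * σ with hβ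
  have hmul : σ * β = α * σ := by rw [hβ]; group
  have hcomp : ∀ p, σ (β p) = α (σ p) := by
    intro p
    have := congrArg (fun (π : Equiv.Perm (Fin (m' + 1))) => π p) hmul
    simpa [Equiv.Perm.mul_apply] using this
  have key : ∀ i : Fin (m' + 1) → Fin N,
      ((List.finRange (m' + 1)).map fun k => ι' (glE N (i (σ k)) (i (σ (β k))))).prod
        = ((tl m').map (fent N α i)).prod * fent N α i 0 := by
    intro i
    have h2 : (fun k => ι' (glE N (i (σ k)) (i (σ (β k))))) = (fent N α i) ∘ σ := by
      funext k
      rw [hcomp]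
      rfl
    rw [h2, ← List.map_map, hσ, map_finRotate_finRange, List.map_append, List.prod_append]
    simp [fent]
  let e : (Fin (m' + 1) → Fin N) ≃ (Fin (m' + 1) → Fin N) :=
    { toFun := fun i => i ∘ σ
      invFun := fun i => i ∘ (σ.symm : Equiv.Perm (Fin (m' + 1)))
      left_inv := fun i => by funext p; simp
      right_inv := fun i => by funext p; simp }
  refine (Fintype.sum_equiv e _ _ (fun i => ?_)).symm
  exact (key i).symm

/-- the "A-type" sums -/
noncomputable def AS (N m' : ℕ) (α : Equiv.Perm (Fin (m' + 1))) (k : Fin (m' + 1)) :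
    UniversalEnvelopingAlgebra ℂ (Matrix (Fin N) (Fin N) ℂ) :=
  ∑ i ∈ Finset.univ.filter (fun i : Fin (m' + 1) → Fin N => i (α 0) = i k),
    prodUpd (tl m') (fent N α i) k (ι' (glE N (i 0) (i (α k))))

/-- the "B-type" sums -/
noncomputable def BS (N m' : ℕ) (α : Equiv.Perm (Fin (m' + 1))) (k : Fin (m' + 1)) :
    UniversalEnvelopingAlgebra ℂ (Matrix (Fin N) (Fin N) ℂ) :=
  ∑ i ∈ Finset.univ.filter (fun i : Fin (m' + 1) → Fin N => i (α k) = i 0),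
    prodUpd (tl m') (fent N α i) k (ι' (glE N (i k) (i (α 0))))

lemma caseGen (N m' : ℕ) (α : Equiv.Perm (Fin (m' + 1))) (k : Fin (m' + 1))
    (hk0 : k ≠ 0) (hka : k ≠ α 0) : AS N m' α k = BS N m' α (α⁻¹ k) := by
  have hak' : α (α⁻¹ k) = k := Equiv.Perm.apply_inv_self α k
  have hα0k : α 0 ≠ k := Ne.symm hka
  have hk'k : ∀ r : Fin (m' + 1), r ≠ α⁻¹ k → α r ≠ k := by
    intro r hr h
    exact hr (by rw [← h, Equiv.Perm.inv_apply_self])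
  unfold AS BS
  refine Finset.sum_bij' (fun i _ => Function.update i k (i 0))
    (fun j _ => Function.update j k (j (α 0))) ?_ ?_ ?_ ?_ ?_
  · intro i hi
    refine Finset.mem_filter.mpr ⟨Finset.mem_univ _, ?_⟩
    rw [hak', Function.update_self, Function.update_of_ne (Ne.symm hk0)]
  · intro j hj
    refine Finset.mem_filter.mpr ⟨Finset.mem_univ _, ?_⟩
    rw [Function.update_of_ne hα0k, Function.update_self]
  · intro i hi
    have hcond : i (α 0) = i k := (Finset.mem_filter.mp hi).2
    rw [Function.update_of_ne hα0k, hcond, Function.update_idem, Function.update_eq_self]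
  · intro j hj
    have hcond : j (α (α⁻¹ k)) = j 0 := (Finset.mem_filter.mp hj).2
    rw [hak'] at hcond
    rw [Function.update_of_ne (Ne.symm hk0), ← hcond, Function.update_idem,
      Function.update_eq_self]
  · intro i hi
    have hcond : i (α 0) = i k := (Finset.mem_filter.mp hi).2
    refine prodUpd_congr ?_
    intro r _
    have hupd_a0 : Function.update i k (i 0) (α 0) = i k := by
      rw [Function.update_of_ne hα0k, hcond]
    by_cases h1 : r = k
    · rw [if_pos h1]
      by_cases h2 : r = α⁻¹ k
      · have hkk' : k = α⁻¹ k := h1.symm.trans h2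
        have hαkk : α k = k := (congrArg α hkk').trans hak'
        rw [if_pos h2, hαkk, hupd_a0, ← hkk', Function.update_self]
      · have hknk' : α k ≠ k := by
          intro h
          have := congrArg (α⁻¹ : Equiv.Perm (Fin (m' + 1))) h
          rw [Equiv.Perm.inv_apply_self] at this
          exact h2 (h1.trans this)
        rw [if_neg h2, h1]
        simp only [fent, Function.update_self, Function.update_of_ne hknk']
    · rw [if_neg h1]
      by_cases h2 : r = α⁻¹ k
      · have hαr : α r = k := by rw [h2, hak']
        rw [if_pos h2, hupd_a0, ← h2, Function.update_of_ne h1]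
        simp only [fent, hαr]
      · rw [if_neg h2]
        simp only [fent, Function.update_of_ne h1, Function.update_of_ne (hk'k r h2)]

lemma caseSpec (N m' : ℕ) (α : Equiv.Perm (Fin (m' + 1))) (ha0 : α 0 ≠ 0) :
    AS N m' α (α 0) = BS N m' α (α⁻¹ 0) := by
  have hk'0 : α⁻¹ 0 ≠ 0 := by
    intro h
    have := congrArg α h
    rw [Equiv.Perm.apply_inv_self] at this
    exact ha0 this.symm
  have hαa : α (α 0) ≠ α 0 := fun h => ha0 (α.injective h)
  unfold AS BS
  rw [Finset.filter_true_of_mem (fun i _ => rfl),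
    Finset.filter_true_of_mem
      (fun (i : Fin (m' + 1) → Fin N) (_ : i ∈ Finset.univ) =>
        show i (α (α⁻¹ 0)) = i 0 by rw [Equiv.Perm.apply_inv_self])]
  refine Fintype.sum_equiv
    (Equiv.arrowCongr (Equiv.swap (0 : Fin (m' + 1)) (α 0)) (Equiv.refl (Fin N)))
    _ _ (fun i => ?_)
  have e_apply : ∀ p, (Equiv.arrowCongr (Equiv.swap (0 : Fin (m' + 1)) (α 0))
      (Equiv.refl (Fin N))) i p = i (Equiv.swap (0 : Fin (m' + 1)) (α 0) p) := by
    intro p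
    rw [Equiv.arrowCongr_apply]
    simp
  refine prodUpd_congr ?_
  intro r hr
  have hr0 : r ≠ 0 := mem_tl.mp hr
  by_cases h1 : r = α 0
  · rw [if_pos h1]
    by_cases h2 : r = α⁻¹ 0
    · have hαr : α (α 0) = 0 := by rw [← h1]; rw [h2, Equiv.Perm.apply_inv_self]
      rw [if_pos h2, hαr, e_apply, e_apply, ← h2, h1, Equiv.swap_apply_right]
    · have har0 : α (α 0) ≠ 0 := by
        intro h
        exact h2 (h1.trans (Equiv.Perm.eq_inv_iff_eq.mpr h))
      rw [if_neg h2]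
      simp only [fent]
      rw [e_apply, e_apply, h1, Equiv.swap_apply_right,
        Equiv.swap_apply_of_ne_of_ne har0 hαa]
  · rw [if_neg h1]
    by_cases h2 : r = α⁻¹ 0
    · have hαr : α r = 0 := by rw [h2, Equiv.Perm.apply_inv_self]
      rw [if_pos h2, ← h2]
      simp only [fent, hαr]
      rw [e_apply, e_apply, Equiv.swap_apply_of_ne_of_ne hr0 h1, Equiv.swap_apply_right]
    · have har0 : α r ≠ 0 := by
        intro h
        apply h2
        rw [← h, Equiv.Perm.inv_apply_self]
      have hara : α r ≠ α 0 := fun h => hr0 (α.injective h)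
      rw [if_neg h2]
      simp only [fent]
      rw [e_apply, e_apply, Equiv.swap_apply_of_ne_of_ne hr0 h1,
        Equiv.swap_apply_of_ne_of_ne har0 hara]

end WGLaux

open WGLaux in
theorem wgl_conj_finRotate (m N : ℕ) (hm : 0 < m) (hN : 0 < N) (α : Equiv.Perm (Fin m)) :
    wgl m N ((finRotate m)⁻¹ * α * finRotate m) = wgl m N α := by
  obtain ⟨m', rfl⟩ : ∃ m', m = m' + 1 := ⟨m - 1, (Nat.succ_pred_eq_of_pos hm).symm⟩
  rw [wgl_tail, wgl_head]
  have memT : ∀ {k : Fin (m' + 1)}, k ∈ (tl m').toFinset ↔ k ≠ 0 := fun {k} => by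
    rw [List.mem_toFinset]; exact mem_tl
  -- the key cancellation : ∑ₖ A = ∑ₖ B
  have ABeq : ∑ k ∈ (tl m').toFinset, AS N m' α k = ∑ k ∈ (tl m').toFinset, BS N m' α k := by
    refine Finset.sum_bij' (fun k _ => if k = α 0 then α⁻¹ 0 else α⁻¹ k)
      (fun k _ => if k = α⁻¹ 0 then α 0 else α k) ?_ ?_ ?_ ?_ ?_
    · intro k hk
      have hk0 : k ≠ 0 := memT.mp hk
      refine memT.mpr ?_
      by_cases h : k = α 0
      · rw [if_pos h]
        intro h0
        exact hk0 (h.trans (Equiv.Perm.inv_eq_iff_eq.mp h0).symm)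
      · rw [if_neg h]
        intro h0
        exact h (Equiv.Perm.inv_eq_iff_eq.mp h0)
    · intro k hk
      have hk0 : k ≠ 0 := memT.mp hk
      refine memT.mpr ?_
      by_cases h : k = α⁻¹ 0
      · rw [if_pos h]
        intro h0
        exact hk0 (h.trans (Equiv.Perm.eq_inv_iff_eq.mpr h0).symm)
      · rw [if_neg h]
        intro h0
        exact h (Equiv.Perm.eq_inv_iff_eq.mpr h0)
    · intro k hk
      by_cases h : k = α 0
      · rw [if_pos h, if_pos rfl, ← h]
      · rw [if_neg h]
        have hne : α⁻¹ k ≠ α⁻¹ 0 := by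
          intro hh
          exact memT.mp hk (Equiv.injective (α⁻¹ : Equiv.Perm (Fin (m' + 1))) hh)
        rw [if_neg hne, Equiv.Perm.apply_inv_self]
    · intro k hk
      by_cases h : k = α⁻¹ 0
      · rw [if_pos h, if_pos rfl, ← h]
      · rw [if_neg h]
        have hne : α k ≠ α 0 := by
          intro hh
          exact memT.mp hk (α.injective hh)
        rw [if_neg hne, Equiv.Perm.inv_apply_self]
    · intro k hk
      by_cases h : k = α 0
      · rw [if_pos h, h]
        exact caseSpec N m' α (fun h0 => memT.mp hk (h.trans h0))
      · rw [if_neg h]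
        exact caseGen N m' α k (memT.mp hk) h
  have main : (∑ i : Fin (m' + 1) → Fin N,
      (fent N α i 0 * ((tl m').map (fent N α i)).prod
        - ((tl m').map (fent N α i)).prod * fent N α i 0)) = 0 := by
    have key : ∀ i : Fin (m' + 1) → Fin N,
        fent N α i 0 * ((tl m').map (fent N α i)).prod
          - ((tl m').map (fent N α i)).prod * fent N α i 0
        = ∑ k ∈ (tl m').toFinset,
            ((if i (α 0) = i k then
                prodUpd (tl m') (fent N α i) k
                  (UniversalEnvelopingAlgebra.ι ℂ (glE N (i 0) (i (α k)))) else 0)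
             - (if i (α k) = i 0 then
                prodUpd (tl m') (fent N α i) k
                  (UniversalEnvelopingAlgebra.ι ℂ (glE N (i k) (i (α 0)))) else 0)) := by
      intro i
      have hce := comm_expand (fent N α i 0) (fent N α i) (tl m') (tl_nodup m')
      rw [← List.sum_toFinset _ (tl_nodup m')] at hce
      rw [hce]
      refine Finset.sum_congr rfl fun k hk => ?_
      exact prodUpd_split α i (List.mem_toFinset.mp hk)
    calc (∑ i : Fin (m' + 1) → Fin N,
          (fent N α i 0 * ((tl m').map (fent N α i)).prod
            - ((tl m').map (fent N α i)).prod * fent N α i 0))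
        = ∑ i : Fin (m' + 1) → Fin N, ∑ k ∈ (tl m').toFinset,
            ((if i (α 0) = i k then
                prodUpd (tl m') (fent N α i) k
                  (UniversalEnvelopingAlgebra.ι ℂ (glE N (i 0) (i (α k)))) else 0)
             - (if i (α k) = i 0 then
                prodUpd (tl m') (fent N α i) k
                  (UniversalEnvelopingAlgebra.ι ℂ (glE N (i k) (i (α 0)))) else 0)) :=
          Finset.sum_congr rfl fun i _ => key i
      _ = ∑ k ∈ (tl m').toFinset, ∑ i : Fin (m' + 1) → Fin N,
            ((if i (α 0) = i k then
                prodUpd (tl m') (fent N α i) k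
                  (UniversalEnvelopingAlgebra.ι ℂ (glE N (i 0) (i (α k)))) else 0)
             - (if i (α k) = i 0 then
                prodUpd (tl m') (fent N α i) k
                  (UniversalEnvelopingAlgebra.ι ℂ (glE N (i k) (i (α 0)))) else 0)) :=
          Finset.sum_comm
      _ = ∑ k ∈ (tl m').toFinset, (AS N m' α k - BS N m' α k) := by
          refine Finset.sum_congr rfl fun k _ => ?_
          rw [Finset.sum_sub_distrib]
          unfold AS BS
          rw [Finset.sum_filter, Finset.sum_filter]
      _ = (∑ k ∈ (tl m').toFinset, AS N m' α k)
            - ∑ k ∈ (tl m').toFinset, BS N m' α k := (Finset.sum_sub_distrib _ _)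
      _ = 0 := by rw [ABeq, sub_self]
  calc (∑ i : Fin (m' + 1) → Fin N,
        ((tl m').map (fent N α i)).prod * fent N α i 0)
      = ∑ i : Fin (m' + 1) → Fin N,
          (fent N α i 0 * ((tl m').map (fent N α i)).prod
            - (fent N α i 0 * ((tl m').map (fent N α i)).prod
              - ((tl m').map (fent N α i)).prod * fent N α i 0)) :=
        Finset.sum_congr rfl fun i _ => (sub_sub_cancel _ _).symm
    _ = (∑ i : Fin (m' + 1) → Fin N,
          fent N α i 0 * ((tl m').map (fent N α i)).prod)
        - ∑ i : Fin (m' + 1) → Fin N,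
            (fent N α i 0 * ((tl m').map (fent N α i)).prod
              - ((tl m').map (fent N α i)).prod * fent N α i 0) := (Finset.sum_sub_distrib _ _)
    _ = ∑ i : Fin (m' + 1) → Fin N,
          fent N α i 0 * ((tl m').map (fent N α i)).prod := by rw [main, sub_zero]
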